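/- If M ⊆ F is invariant and chain transitive for the discrete-time flow generated by g, then S¹ ×_g M is chain transitive for the skew-product flow φᵗ. -/

import Mathlib

/-- An `(ε, S)`-chain from `x` to `y` for `σ`, with respect to the distance function `d`:
finitely many times in `S` and jump points, each jump smaller than `ε` at the endpoint. -/
def IsChainFrom {U T : Type*} (d : U → U → ℝ) (σ : T → U → U) (S : Set T)
    (ε : U → ℝ) (x y : U) : Prop :=
  ∃ k : ℕ, ∃ ts : Fin (k + 1) → T, ∃ xs : Fin (k + 2) → U,
    xs 0 = x ∧ xs (Fin.last (k + 1)) = y ∧ (∀ i, ts i ∈ S) ∧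
    ∀ i : Fin (k + 1),
      d (xs i.succ) (σ (ts i) (xs i.castSucc)) < ε (σ (ts i) (xs i.castSucc))

/-- A natural number shift does not change the class in the unit circle. -/
lemma coe_add_nat_unitAddCircle (r : ℝ) (N : ℕ) :
    ((r + (N : ℝ) : ℝ) : UnitAddCircle) = (r : UnitAddCircle) := by
  induction N with
  | zero => norm_num
  | succ n ih =>
      have : (r + ((n + 1 : ℕ) : ℝ) : ℝ) = (r + (n : ℝ)) + 1 := by push_cast; ring
      rw [this, AddCircle.coe_add_period (1:ℝ) (r + (n : ℝ))]
      exact ih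

/-- Periodicity of the coefficient implies `g (t + 1) = g t * g 1`, by uniqueness of
solutions of the linear ODE. -/
lemma fundamental_shift {F : Type*} [NormedAddCommGroup F] [NormedSpace ℝ F]
    (X g : ℝ → F →L[ℝ] F)
    (hX : Continuous X) (hXper : ∀ t, X (t + 1) = X t)
    (hg0 : g 0 = 1) (hg : ∀ t, HasDerivAt g (X t ∘L g t) t) (t : ℝ) :
    g (t + 1) = g t * g 1 := by
  -- a global bound on ‖X‖
  have hper : Function.Periodic X 1 := hXper
  obtain ⟨C, hC⟩ := isCompact_Icc.exists_bound_of_continuousOn (f := X)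
    (hX.continuousOn : ContinuousOn X (Set.Icc (0:ℝ) 1))
  have hCall : ∀ τ : ℝ, ‖X τ‖ ≤ C := by
    intro τ
    obtain ⟨y, hy, hXy⟩ := hper.exists_mem_Ico₀ one_pos τ
    rw [hXy]
    exact hC y (Set.mem_Icc_of_Ico hy)
  -- Lipschitz bound for the vector field A ↦ X τ * A
  have hv : ∀ τ : ℝ, LipschitzWith C.toNNReal
      (fun A : F →L[ℝ] F => X τ * A) := by
    intro τ
    apply LipschitzWith.of_dist_le_mul
    intro A B
    rw [dist_eq_norm, dist_eq_norm]
    rw [← mul_sub, ContinuousLinearMap.mul_def]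
    have hK : ‖X τ‖ ≤ (C.toNNReal : ℝ) :=
      (hCall τ).trans (by rw [Real.coe_toNNReal']; exact le_max_left _ _)
    calc ‖(X τ).comp (A - B)‖ ≤ ‖X τ‖ * ‖A - B‖ := ContinuousLinearMap.opNorm_comp_le _ _
      _ ≤ (C.toNNReal : ℝ) * ‖A - B‖ :=
          mul_le_mul_of_nonneg_right hK (norm_nonneg _)
  have hgmul : ∀ τ, X τ ∘L g τ = X τ * g τ := fun τ => rfl
  -- solutions of the same ODE
  have hf' : ∀ τ : ℝ, HasDerivAt (fun u => g (u + 1)) (X τ * g (τ + 1)) τ := by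
    intro τ
    have h1 : HasDerivAt (fun u : ℝ => u + 1) 1 τ := (hasDerivAt_id τ).add_const 1
    have := HasDerivAt.scomp (x := τ) (hg (τ + 1)) h1
    simp only [one_smul, hXper τ] at this
    exact this
  have hh' : ∀ τ : ℝ, HasDerivAt (fun u => g u * g 1) (X τ * (g τ * g 1)) τ := by
    intro τ
    have := (hg τ).mul_const (g 1)
    rw [hgmul] at this
    simpa [mul_assoc] using this
  set b : ℝ := |t| + 1 with hb
  have hmem : t ∈ Set.Icc (-b) b := by
    constructor <;> [nlinarith [abs_nonneg t, neg_abs_le t]; nlinarith [le_abs_self t]]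
  have h0 : (0 : ℝ) ∈ Set.Ioo (-b) b := by
    constructor <;> nlinarith [abs_nonneg t]
  have gcont : Continuous g := by
    rw [continuous_iff_continuousAt]
    exact fun τ => (hg τ).continuousAt
  have := ODE_solution_unique_of_mem_Icc (v := fun τ A => X τ * A)
    (s := fun _ => Set.univ) (K := C.toNNReal) (fun τ _ => (hv τ).lipschitzOnWith)
    h0
    ((gcont.comp (continuous_id.add continuous_const)).continuousOn)
    (fun τ _ => hf' τ) (fun _ _ => Set.mem_univ _)
    ((gcont.mul continuous_const).continuousOn)
    (fun τ _ => hh' τ) (fun _ _ => Set.mem_univ _)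
    (by simp [hg0])
  exact this hmem

/-- Iterated version: `g (t + n) = g t * (g 1) ^ n`. -/
lemma fundamental_shift_nat {F : Type*} [NormedAddCommGroup F] [NormedSpace ℝ F]
    (X g : ℝ → F →L[ℝ] F)
    (hX : Continuous X) (hXper : ∀ t, X (t + 1) = X t)
    (hg0 : g 0 = 1) (hg : ∀ t, HasDerivAt g (X t ∘L g t) t) (t : ℝ) (n : ℕ) :
    g (t + (n : ℝ)) = g t * (g 1) ^ n := by
  induction n with
  | zero => simp
  | succ m ih =>
      have h1 : (t + ((m + 1 : ℕ) : ℝ) : ℝ) = (t + (m : ℝ)) + 1 := by push_cast; ring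
      rw [h1, fundamental_shift X g hX hXper hg0 hg, ih, pow_succ, mul_assoc]

/-- If `M ⊆ F` is invariant and chain transitive for the discrete-time flow generated by
`g = g 1`, then `S¹ ×_g M` is chain transitive for the skew-product flow `φᵗ`, where
chains are taken with respect to the metric
`d̄((s̄,x),(r̄,y)) = min{|s−r|,1−|s−r|} + ‖x−y‖` and positive continuous `ε`. -/
theorem skew_product_chain_transitive
    {F : Type*} [NormedAddCommGroup F] [NormedSpace ℝ F] [CompleteSpace F]
    (X g ginv : ℝ → F →L[ℝ] F)
    (hX : Continuous X) (hXper : ∀ t, X (t + 1) = X t)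
    (hg0 : g 0 = 1) (hg : ∀ t, HasDerivAt g (X t ∘L g t) t)
    (hinv : ∀ s, g s ∘L ginv s = 1 ∧ ginv s ∘L g s = 1)
    (φ : ℝ → UnitAddCircle × F → UnitAddCircle × F)
    (hφ : ∀ (t s : ℝ) (x : F),
      φ t ((s : UnitAddCircle), x) = (((s + t : ℝ) : UnitAddCircle), g (t + s) (ginv s x)))
    (M : Set F) (hMinv : g 1 '' M = M)
    (hMct : ∀ x ∈ M, ∀ y ∈ M, ∀ ε : F → ℝ, Continuous ε → (∀ u, 0 < ε u) →
      ∀ t : ℝ, 0 < t →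
        IsChainFrom (fun x y => ‖x - y‖) (fun (n : ℕ) (x : F) => (g 1 ^ n) x)
          {n : ℕ | t < (n : ℝ)} ε x y) :
    ∀ p ∈ ⋃ s : ℝ, (fun y => ((s : UnitAddCircle), y)) '' (g s '' M),
      ∀ q ∈ ⋃ s : ℝ, (fun y => ((s : UnitAddCircle), y)) '' (g s '' M),
        ∀ ε : UnitAddCircle × F → ℝ, Continuous ε → (∀ u, 0 < ε u) →
          ∀ t : ℝ, 0 < t →
            IsChainFrom (fun p q => dist p.1 q.1 + ‖p.2 - q.2‖) φ
              {r : ℝ | t < r} ε p q := by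
  have key : ∀ (u : ℝ) (n : ℕ), g (u + (n : ℝ)) = g u * (g 1) ^ n :=
    fundamental_shift_nat X g hX hXper hg0 hg
  have hginv : ∀ (u : ℝ) (z : F), ginv u (g u z) = z := by
    intro u z
    have : (ginv u ∘L g u) z = (1 : F →L[ℝ] F) z := by rw [(hinv u).2]
    simpa using this
  have hMpow : ∀ (n : ℕ) (z : F), z ∈ M → ((g 1) ^ n) z ∈ M := by
    intro n
    induction n with
    | zero => intro z hz; simpa using hz
    | succ m ih =>
        intro z hz
        have h1 : (g 1) ((g 1 ^ m) z) ∈ g 1 '' M := Set.mem_image_of_mem _ (ih z hz)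
        rw [hMinv] at h1
        simpa [pow_succ', ContinuousLinearMap.mul_apply] using h1
  intro p hp q hq ε hεc hεpos t ht
  simp only [Set.mem_iUnion, Set.mem_image] at hp hq
  obtain ⟨s, _, ⟨x, hxM, rfl⟩, rfl⟩ := hp
  obtain ⟨r, _, ⟨y, hyM, rfl⟩, rfl⟩ := hq
  -- time to flow from the fiber over s to the fiber over r
  set N : ℕ := ⌈t + s - r⌉₊ + 1 with hN
  set τ : ℝ := r - s + N with hτ
  have hτt : t < τ := by
    have h1 : t + s - r ≤ (⌈t + s - r⌉₊ : ℝ) := Nat.le_ceil _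
    have h2 : ((N : ℕ) : ℝ) = (⌈t + s - r⌉₊ : ℝ) + 1 := by rw [hN]; push_cast; ring
    rw [hτ, h2]; linarith
  set x' : F := ((g 1) ^ N) x with hx'
  have hx'M : x' ∈ M := hMpow N x hxM
  -- the transported error function on the fiber over r
  set ε' : F → ℝ := fun u => ε ((r : UnitAddCircle), g r u) / (‖g r‖ + 1) with hε'
  have hε'c : Continuous ε' := by
    apply Continuous.div_const
    exact hεc.comp (continuous_const.prodMk (g r).continuous)
  have hε'pos : ∀ u, 0 < ε' u := by
    intro u
    exact div_pos (hεpos _) (by positivity)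
  obtain ⟨k, ts, xs, hxs0, hxsl, htsS, hstep⟩ := hMct x' hx'M y hyM ε' hε'c hε'pos t ht
  -- computation of flow steps within the fiber over r
  have hflow : ∀ (n : ℕ) (z : F),
      φ (n : ℝ) ((r : UnitAddCircle), g r z)
        = ((r : UnitAddCircle), g r (((g 1) ^ n) z)) := by
    intro n z
    rw [hφ (n : ℝ) r (g r z)]
    congr 1
    · exact coe_add_nat_unitAddCircle r n
    · rw [hginv r z, add_comm ((n : ℝ)) r, key r n, ContinuousLinearMap.mul_apply]
  refine ⟨k + 1, Fin.cons τ (fun i => ((ts i : ℕ) : ℝ)),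
    Fin.cons ((s : UnitAddCircle), g s x)
      (fun j => ((r : UnitAddCircle), g r (xs j))), ?_, ?_, ?_, ?_⟩
  · simp
  · rw [← Fin.succ_last, Fin.cons_succ, hxsl]
  · intro i
    induction i using Fin.cases with
    | zero => simpa using hτt
    | succ j => simpa using htsS j
  · intro i
    induction i using Fin.cases with
    | zero =>
        simp only [Fin.castSucc_zero, Fin.cons_zero, Fin.cons_succ]
        have h1 : φ (τ : ℝ) ((s : UnitAddCircle), g s x)
            = ((r : UnitAddCircle), g r x') := by
          rw [hφ τ s (g s x), hginv s x]
          congr 1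
          · have : (s + τ : ℝ) = r + (N : ℝ) := by rw [hτ]; ring
            rw [this]; exact coe_add_nat_unitAddCircle r N
          · have : (τ + s : ℝ) = r + (N : ℝ) := by rw [hτ]; ring
            rw [this, key r N, ContinuousLinearMap.mul_apply, hx']
        rw [h1, hxs0]
        simpa using hεpos ((r : UnitAddCircle), g r x')
    | succ j =>
        rw [← Fin.succ_castSucc]
        simp only [Fin.cons_succ]
        rw [hflow (ts j) (xs j.castSucc)]
        set w : F := ((g 1) ^ (ts j)) (xs j.castSucc) with hw
        have hb := hstep j
        simp only [← hw, hε'] at hb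
        have hgr : (0 : ℝ) ≤ ‖g r‖ := norm_nonneg _
        have h1 : ‖g r (xs j.succ) - g r w‖ ≤ ‖g r‖ * ‖xs j.succ - w‖ := by
          rw [← map_sub]
          exact (g r).le_opNorm _
        have h2 : ‖xs j.succ - w‖ * (‖g r‖ + 1) < ε ((r : UnitAddCircle), g r w) := by
          have hpos : (0 : ℝ) < ‖g r‖ + 1 := by positivity
          exact (lt_div_iff₀ hpos).mp hb
        have h3 : ‖g r (xs j.succ) - g r w‖ < ε ((r : UnitAddCircle), g r w) := by
          nlinarith [norm_nonneg (xs j.succ - w)]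
        simpa using h3
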